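/- Let X and Y be random variables on a finite probability space. For any c > 0, conditioning does not increase the t-entropy: H_c(X|Y) ≤ H_c(X), with equality when X and Y are independent. -/

import Mathlib

open Real

/-- t-entropy of the first marginal of a joint pmf `p : Fin n → Fin m → ℝ`. -/
noncomputable def tEntropyMargX {n m : ℕ} (c : ℝ) (p : Fin n → Fin m → ℝ) : ℝ :=
  (∑ i, (∑ j, p i j) * Real.arctan ((∑ j, p i j) ^ (-c))) - Real.pi / 4

/-- Conditional t-entropy `H_c(X | Y)` with `p(x|y) = p(x,y)/p(y)`
(zero-probability terms contributing 0). -/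
noncomputable def tEntropyCondXY {n m : ℕ} (c : ℝ) (p : Fin n → Fin m → ℝ) : ℝ :=
  (∑ i, ∑ j, p i j * Real.arctan ((p i j / ∑ i', p i' j) ^ (-c))) - Real.pi / 4

namespace TEntropyAux

variable {c : ℝ}

noncomputable def f (c : ℝ) (t : ℝ) : ℝ := t * Real.arctan (t ^ (-c))

noncomputable def G (c : ℝ) (s : ℝ) : ℝ := Real.arctan s - c * (s / (1 + s ^ 2))

lemma hasDerivAt_G (s : ℝ) :
    HasDerivAt (G c) (1 / (1 + s ^ 2) - c * ((1 * (1 + s ^ 2) - s * (2 * s)) / (1 + s ^ 2) ^ 2)) s := by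
  have hne : (1 + s ^ 2) ≠ 0 := by positivity
  have h1 : HasDerivAt (fun s : ℝ => 1 + s ^ 2) (2 * s) s := by
    simpa using (hasDerivAt_pow 2 s).const_add 1
  have h2 : HasDerivAt (fun s : ℝ => s / (1 + s ^ 2))
      ((1 * (1 + s ^ 2) - s * (2 * s)) / (1 + s ^ 2) ^ 2) s :=
    (hasDerivAt_id s).div h1 hne
  exact (Real.hasDerivAt_arctan s).sub (h2.const_mul c)

lemma G_mono (hc : 0 < c) : MonotoneOn (G c) (Set.Ici 1) := by
  apply monotoneOn_of_deriv_nonneg (convex_Ici 1)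
  · apply Continuous.continuousOn
    apply Real.continuous_arctan.sub
    exact continuous_const.mul (continuous_id.div (by continuity) fun s => by positivity)
  · intro s _
    exact (hasDerivAt_G s).differentiableAt.differentiableWithinAt
  · intro s hs
    rw [interior_Ici] at hs
    rw [(hasDerivAt_G s).deriv]
    have h1 : (1 : ℝ) ≤ s := le_of_lt hs
    have hd : (0 : ℝ) < 1 + s ^ 2 := by positivity
    have key : c * ((1 * (1 + s ^ 2) - s * (2 * s)) / (1 + s ^ 2) ^ 2) ≤ 0 := by
      apply mul_nonpos_of_nonneg_of_nonpos (le_of_lt hc)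
      apply div_nonpos_of_nonpos_of_nonneg _ (by positivity)
      nlinarith
    have hpos : (0:ℝ) < 1 / (1 + s ^ 2) := by positivity
    linarith

lemma hasDerivAt_f {t : ℝ} (ht : 0 < t) :
    HasDerivAt (f c) (1 * Real.arctan (t ^ (-c)) +
      t * (1 / (1 + (t ^ (-c)) ^ 2) * (-c * t ^ (-c - 1)))) t := by
  have h1 : HasDerivAt (fun t : ℝ => t ^ (-c)) (-c * t ^ (-c - 1)) t := by
    simpa [mul_comm] using Real.hasDerivAt_rpow_const (p := -c) (Or.inl ht.ne')
  have h2 := (Real.hasDerivAt_arctan (t ^ (-c))).comp t h1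
  exact (hasDerivAt_id t).mul h2

lemma deriv_f_eq {t : ℝ} (ht : 0 < t) : deriv (f c) t = G c (t ^ (-c)) := by
  rw [(hasDerivAt_f ht).deriv, G]
  have h : t * t ^ (-1 - c) = t ^ (-c) := by
    rw [show (-c : ℝ) = (-1 - c) + 1 by ring, Real.rpow_add ht, Real.rpow_one]
    ring
  have hne : (1 + (t ^ (-c)) ^ 2 : ℝ) ≠ 0 := by positivity
  field_simp
  ring_nf
  rw [mul_assoc c t, h]

lemma anti_deriv_f (hc : 0 < c) : AntitoneOn (deriv (f c)) (Set.Ioo 0 1) := by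
  intro a ha b hb hab
  rw [deriv_f_eq ha.1, deriv_f_eq hb.1]
  have h1 : (1 : ℝ) ≤ b ^ (-c) :=
    Real.one_le_rpow_of_pos_of_le_one_of_nonpos hb.1 hb.2.le (neg_nonpos.mpr hc.le)
  have h2 : b ^ (-c) ≤ a ^ (-c) :=
    Real.rpow_le_rpow_of_nonpos ha.1 hab (neg_nonpos.mpr hc.le)
  exact G_mono hc h1 (le_trans h1 h2) h2

lemma f_nonneg {t : ℝ} (ht : 0 ≤ t) : 0 ≤ f c t := by
  apply mul_nonneg ht
  rw [← Real.arctan_zero]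
  exact Real.arctan_strictMono.monotone (Real.rpow_nonneg ht _)

lemma continuousOn_f : ContinuousOn (f c) (Set.Icc 0 1) := by
  intro x hx
  rcases eq_or_lt_of_le hx.1 with h0 | h0
  · subst h0
    have hf0 : f c 0 = 0 := by simp [f]
    rw [ContinuousWithinAt, hf0]
    apply squeeze_zero' (g := fun t => t * (Real.pi / 2))
    · filter_upwards [self_mem_nhdsWithin] with t ht
      exact f_nonneg ht.1
    · filter_upwards [self_mem_nhdsWithin] with t ht
      exact mul_le_mul_of_nonneg_left (Real.arctan_lt_pi_div_two _).le ht.1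
    · have : Filter.Tendsto (fun t : ℝ => t * (Real.pi / 2)) (nhdsWithin 0 (Set.Icc 0 1))
          (nhds ((0 : ℝ) * (Real.pi / 2))) :=
        (continuous_id.mul continuous_const).continuousWithinAt
      simpa using this
  · exact ((hasDerivAt_f h0).continuousAt).continuousWithinAt

lemma concave_f (hc : 0 < c) : ConcaveOn ℝ (Set.Icc 0 1) (f c) := by
  apply AntitoneOn.concaveOn_of_deriv (convex_Icc 0 1) continuousOn_f
  · rw [interior_Icc]
    exact fun t ht => (hasDerivAt_f ht.1).differentiableAt.differentiableWithinAt
  · rw [interior_Icc]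
    exact anti_deriv_f hc

lemma jensen {m : ℕ} (hc : 0 < c) (w x : Fin m → ℝ) (hw : ∀ j, 0 ≤ w j)
    (hw1 : ∑ j, w j = 1) (hx : ∀ j, x j ∈ Set.Icc (0:ℝ) 1) :
    ∑ j, w j * f c (x j) ≤ f c (∑ j, w j * x j) := by
  have := (concave_f hc).le_map_sum (t := Finset.univ) (w := w) (p := x)
    (fun j _ => hw j) hw1 (fun j _ => hx j)
  simpa [smul_eq_mul] using this

end TEntropyAux

theorem tEntropy_cond_le {n m : ℕ} (c : ℝ) (hc : 0 < c)
    (p : Fin n → Fin m → ℝ) (hp : ∀ i j, 0 ≤ p i j)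
    (hsum : ∑ i, ∑ j, p i j = 1) :
    tEntropyCondXY c p ≤ tEntropyMargX c p ∧
    ((∀ i j, p i j = (∑ j', p i j') * (∑ i', p i' j)) →
      tEntropyCondXY c p = tEntropyMargX c p) := by
  classical
  set q : Fin m → ℝ := fun j => ∑ i', p i' j with hq
  set r : Fin n → ℝ := fun i => ∑ j, p i j with hr
  have hq0 : ∀ j, 0 ≤ q j := fun j => Finset.sum_nonneg fun i _ => hp i j
  have hq1 : ∑ j, q j = 1 := by rw [← hsum, Finset.sum_comm]
  have hqz : ∀ j, q j = 0 → ∀ i, p i j = 0 := by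
    intro j hj i
    exact (Finset.sum_eq_zero_iff_of_nonneg (fun i _ => hp i j)).mp hj i (Finset.mem_univ i)
  have hple : ∀ i j, p i j ≤ q j := fun i j =>
    Finset.single_le_sum (f := fun i' => p i' j) (fun i' _ => hp i' j) (Finset.mem_univ i)
  -- the conditional probabilities
  have hx01 : ∀ i j, p i j / q j ∈ Set.Icc (0:ℝ) 1 := by
    intro i j
    rcases eq_or_lt_of_le (hq0 j) with h | h
    · simp [← h]
    · exact ⟨div_nonneg (hp i j) (hq0 j), (div_le_one h).mpr (hple i j)⟩
  have hterm : ∀ i j, q j * TEntropyAux.f c (p i j / q j)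
      = p i j * Real.arctan ((p i j / q j) ^ (-c)) := by
    intro i j
    rcases eq_or_lt_of_le (hq0 j) with h | h
    · rw [TEntropyAux.f, ← h, hqz j h.symm i]; ring
    · rw [TEntropyAux.f, ← mul_assoc, mul_div_cancel₀ _ h.ne']
  have hcomb : ∀ i, ∑ j, q j * (p i j / q j) = r i := by
    intro i
    rw [hr]
    apply Finset.sum_congr rfl
    intro j _
    rcases eq_or_lt_of_le (hq0 j) with h | h
    · rw [← h, hqz j h.symm i]; ring
    · rw [mul_div_cancel₀ _ h.ne']
  have key : ∀ i, ∑ j, p i j * Real.arctan ((p i j / q j) ^ (-c))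
      ≤ r i * Real.arctan ((r i) ^ (-c)) := by
    intro i
    calc ∑ j, p i j * Real.arctan ((p i j / q j) ^ (-c))
        = ∑ j, q j * TEntropyAux.f c (p i j / q j) := by
          exact (Finset.sum_congr rfl fun j _ => (hterm i j).symm)
      _ ≤ TEntropyAux.f c (∑ j, q j * (p i j / q j)) :=
          TEntropyAux.jensen hc q _ hq0 hq1 (hx01 i)
      _ = r i * Real.arctan ((r i) ^ (-c)) := by rw [hcomb i, TEntropyAux.f]
  constructor
  · rw [tEntropyCondXY, tEntropyMargX]
    apply sub_le_sub_right
    exact Finset.sum_le_sum fun i _ => key i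
  · intro hind
    rw [tEntropyCondXY, tEntropyMargX]
    congr 1
    apply Finset.sum_congr rfl
    intro i _
    have : ∀ j, p i j * Real.arctan ((p i j / q j) ^ (-c))
        = p i j * Real.arctan ((r i) ^ (-c)) := by
      intro j
      rcases eq_or_lt_of_le (hq0 j) with h | h
      · rw [hqz j h.symm i]; ring
      · have : p i j / q j = r i := by
          rw [hind i j, hr, hq]
          field_simp
          exact mul_div_cancel_right₀ _ h.ne'
        rw [this]
    rw [Finset.sum_congr rfl fun j _ => this j, ← Finset.sum_mul]
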